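/- Let G be a two-player symmetric potential game with finite action set A, and let c : A → ℝ satisfy (s_1(i,j)-s_1(j,i))/2 = c(j)-c(i). Define the imitate-if-better strategy of player a by T_a(σ_a|(σ'_a, σ'_{-a})) = δ_{σ_a, σ'_{-a}} if s_{-a}(σ') > s_a(σ') and δ_{σ_a, σ'_a} otherwise. Then its Press-Dyson vectors satisfy Σ_{σ_a} c(σ_a) T̂_a(σ_a|σ') = (1/2)[s_a(σ') - s_{-a}(σ')] · 1[s_{-a}(σ') > s_a(σ')] for all σ' ∈ A². -/
import Mathlib


/-- In a symmetric potential game, the Press-Dyson vectors of the imitate-if-better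
strategy of player 1 satisfy
`∑ σ c σ T̂₁(σ|σ') = (1/2)(s1(σ') - s2(σ')) · 1[s2(σ') > s1(σ')]`. -/
theorem stmt17 {M : ℕ} (s1 s2 : Fin M × Fin M → ℝ)
    (hsym : ∀ i j, s2 (i, j) = s1 (j, i))
    (c : Fin M → ℝ)
    (hc : ∀ i j, (s1 (i, j) - s1 (j, i)) / 2 = c j - c i)
    (T1 : Fin M → Fin M × Fin M → ℝ)
    (hT1 : ∀ σ σ', T1 σ σ' =
      if s2 σ' > s1 σ' then (if σ = σ'.2 then 1 else 0) else (if σ = σ'.1 then 1 else 0)) :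
    ∀ σ' : Fin M × Fin M,
      (∑ σ : Fin M, c σ * (T1 σ σ' - if σ = σ'.1 then 1 else 0))
        = (1 / 2) * (s1 σ' - s2 σ') * (if s2 σ' > s1 σ' then 1 else 0) := by

  rintro ⟨i, j⟩
  simp only [hT1]
  by_cases h : s2 (i, j) > s1 (i, j)
  · simp only [if_pos h]
    have : ∀ σ : Fin M, c σ * ((if σ = (i,j).2 then (1:ℝ) else 0) - if σ = (i,j).1 then 1 else 0)
        = (if σ = j then c σ else 0) - (if σ = i then c σ else 0) := by
      intro σ; by_cases h1 : σ = j <;> by_cases h2 : σ = i <;> simp [h1, h2] <;> split_ifs <;> ring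
    rw [Finset.sum_congr rfl fun σ _ => this σ, Finset.sum_sub_distrib]
    simp only [Finset.sum_ite_eq', Finset.mem_univ, if_true]
    have := hc i j
    rw [hsym] at *
    linarith
  · simp only [if_neg h]
    simp
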